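/- For all integers k ≥ 2 and n ≥ 2 − k, the k-generalized Lucas number satisfies |L_n^(k) − (2α − 1) f_k(α) α^(n−1)| < 3/2, where α is the dominant root of Ψ_k(x) and f_k(x) = (x − 1)/(2 + (k+1)(x − 2)). -/

import Mathlib

set_option maxHeartbeats 2000000

/-- For k ≥ 2 and n ≥ 2 − k, |L_n^(k) − (2α − 1) f_k(α) α^(n−1)| < 3/2, where α
    is the dominant root of Ψ_k and f_k(x) = (x − 1)/(2 + (k+1)(x − 2)). -/
theorem lucas_binet_error (k : ℕ) (hk : 2 ≤ k) (L : ℤ → ℤ)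
    (hinit : ∀ j : ℤ, 2 - (k : ℤ) ≤ j → j ≤ -1 → L j = 0)
    (hL0 : L 0 = 2) (hL1 : L 1 = 1)
    (hrec : ∀ n : ℤ, 2 ≤ n → L n = ∑ i ∈ Finset.Icc (1 : ℤ) (k : ℤ), L (n - i))
    (α : ℝ) (hα1 : 1 < α) (hα2 : α < 2)
    (hroot : α ^ k = ∑ i ∈ Finset.range k, α ^ i)
    (n : ℤ) (hn : 2 - (k : ℤ) ≤ n) :
    |(L n : ℝ) - (2 * α - 1) * ((α - 1) / (2 + (k + 1) * (α - 2))) * α ^ (n - 1)| < 3 / 2 := by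
  obtain ⟨m, rfl⟩ : ∃ m, k = m + 2 := ⟨k - 2, by omega⟩
  set k : ℕ := m + 2 with hkdef
  have hα0 : (0:ℝ) < α := by linarith
  have hαne : α ≠ 0 := ne_of_gt hα0
  set K : ℝ := (k : ℝ) with hKdef
  have hK2 : (2:ℝ) ≤ K := by
    rw [hKdef, hkdef]; push_cast; linarith [Nat.cast_nonneg (α := ℝ) m]
  -- key algebraic identity: α^k (2 - α) = 1
  have hkey : α ^ k * (2 - α) = 1 := by
    have h := geom_sum_mul α k
    rw [← hroot] at h
    nlinarith [h]
  -- α^k > K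
  have hpowk : K < α ^ k := by
    have hle : ∀ i ∈ Finset.range k, (1:ℝ) ≤ α ^ i := fun i _ => one_le_pow₀ hα1.le
    have h2 : ∑ _i ∈ Finset.range k, (1:ℝ) < ∑ i ∈ Finset.range k, α ^ i :=
      Finset.sum_lt_sum hle ⟨1, by simp [hkdef], by simpa using hα1⟩
    rw [← hroot] at h2
    simpa [hKdef] using h2
  -- α^k ≥ 1 + (K-1)α
  have hlin : 1 + (K - 1) * α ≤ α ^ k := by
    have hstep : ((m:ℝ) + 1) * α ≤ ∑ i ∈ Finset.range (m+1), α ^ (i+1) := by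
      have h := Finset.card_nsmul_le_sum (Finset.range (m+1)) (fun i => α ^ (i+1)) α
        (fun i _ => le_self_pow₀ hα1.le (Nat.succ_ne_zero i))
      simpa [nsmul_eq_mul] using h
    have hsum2 : α ^ k = ∑ i ∈ Finset.range (m+1), α ^ (i+1) + 1 := by
      rw [hroot, hkdef]
      rw [Finset.sum_range_succ' (fun i => α ^ i) (m+1)]
      simp
    have hKm : K = (m:ℝ) + 2 := by rw [hKdef, hkdef]; push_cast; ring
    rw [hsum2, hKm]
    linarith
  have heps1 : (2 - α) * K < 1 := by nlinarith
  have heps2 : (2 - α) * (1 + (K - 1) * α) ≤ 1 := by nlinarith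
  have hα85 : 8/5 < α := by
    rcases Nat.eq_zero_or_pos m with hm | hm
    · have hKm : K = 2 := by rw [hKdef, hkdef, hm]; norm_num
      rw [hKm] at heps2
      nlinarith [sq_nonneg (α - 8/5)]
    · have hK3 : (3:ℝ) ≤ K := by
        rw [hKdef, hkdef]; push_cast
        have : (1:ℝ) ≤ (m:ℝ) := by exact_mod_cast hm
        linarith
      nlinarith [heps1]
  have heps3 : (2 - α) * (2*K^2 - 2*K + 1) < K := by
    have e0 : (0:ℝ) < 2 - α := by linarith
    have h1 : (2-α) * (2*K-1) - (K-1)*(2-α)^2 ≤ 1 := by nlinarith [heps2]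
    have h2 : K * ((2-α) * (2*K-1) - (K-1)*(2-α)^2) ≤ K * 1 :=
      mul_le_mul_of_nonneg_left h1 (by linarith)
    have hp : (0:ℝ) < (K-1)*(2-α) := mul_pos (by linarith) e0
    have h3 : (K-1)*(2-α) * ((2-α)*K) < (K-1)*(2-α) * 1 :=
      mul_lt_mul_of_pos_left heps1 hp
    nlinarith [h2, h3]
  have hDpos : 4/5 < (K + 1) * α - 2 * K := by
    have h7 : (0:ℝ) ≤ (7*K-3)*(K-2) := mul_nonneg (by linarith) (by linarith)
    have hq : (0:ℝ) < 2*K^2 - 2*K + 1 := by nlinarith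
    have hK1 : (0:ℝ) < K + 1 := by linarith
    have hA := mul_lt_mul_of_pos_left heps3 hK1
    nlinarith [hA, h7, hq, mul_pos hK1 hq]
  set D : ℝ := (K + 1) * α - 2 * K with hDdef
  have hD0 : (0:ℝ) < D := by linarith
  set c : ℝ := (2 * α - 1) * (α - 1) / D with hcdef
  have hcD : c * D = (2 * α - 1) * (α - 1) := div_mul_cancel₀ _ (ne_of_gt hD0)
  have hc1 : α / 2 < c := by
    rw [hcdef, lt_div_iff₀ hD0, hDdef]
    have hp0 : (0:ℝ) ≤ α * (2 - α) := by nlinarith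
    have hp1 : α * (2 - α) ≤ 1 := by nlinarith [sq_nonneg (α - 1)]
    have hmm : -(α * (2-α)) ≤ (K - 3) * (α * (2-α)) := by
      nlinarith [mul_le_mul_of_nonneg_right (show (-1:ℝ) ≤ K - 3 by linarith) hp0]
    nlinarith [hmm, hp1]
  have hc2 : c < 5/2 := by
    rw [hcdef, div_lt_iff₀ hD0, hDdef]
    have e0 : (0:ℝ) < 2 - α := by linarith
    have h5 : 2*K*((K-1)*(2-α)) < K := by nlinarith [heps3, e0]
    have hx : (K-1)*(2-α) < 1/2 := by
      nlinarith [h5, mul_pos (show (0:ℝ) < K by linarith) e0]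
    nlinarith [hx, hα85, sq_nonneg (2 - α)]
  -- the error function
  set e : ℤ → ℝ := fun j => (L j : ℝ) - c * α ^ (j - 1) with hedef
  -- reindexing Icc sums to range sums
  have hIcc : ∀ f : ℤ → ℝ, ∑ i ∈ Finset.Icc (1:ℤ) (k:ℤ), f i
      = ∑ i ∈ Finset.range k, f ((i:ℤ) + 1) := by
    intro f
    refine Finset.sum_nbij' (fun a => (a - 1).toNat) (fun a => (a:ℤ) + 1) ?_ ?_ ?_ ?_ ?_
    · intro a ha; simp only [Finset.mem_Icc] at ha; simp only [Finset.mem_range]; omega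
    · intro a ha; simp only [Finset.mem_range] at ha; simp only [Finset.mem_Icc]; omega
    · intro a ha; simp only [Finset.mem_Icc] at ha; omega
    · intro a ha; simp only [Finset.mem_range] at ha; omega
    · intro a ha; simp only [Finset.mem_Icc] at ha; congr 1; omega
  -- recurrence for L over range
  have hrecR : ∀ j : ℤ, 2 ≤ j → (L j : ℝ) = ∑ i ∈ Finset.range k, (L (j - 1 - i) : ℝ) := by
    intro j hj
    have h' : (L j : ℝ) = ∑ i ∈ Finset.Icc (1:ℤ) (k:ℤ), ((L (j - i)):ℝ) := by
      rw [hrec j hj]; push_cast; rfl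
    rw [h', hIcc (fun i => (L (j - i) : ℝ))]
    refine Finset.sum_congr rfl fun i _ => ?_
    congr 2
    ring
  -- geometric sum of zpow
  have hzsum : ∀ j : ℤ, ∑ i ∈ Finset.range k, α ^ (j - 2 - (i:ℤ)) = α ^ (j - 1) := by
    intro j
    have h1 : ∀ i ∈ Finset.range k, α ^ (j - 2 - (i:ℤ)) = α ^ (j - 1 - (k:ℤ)) * α ^ ((k - 1 - i : ℕ)) := by
      intro i hi
      simp only [Finset.mem_range] at hi
      rw [← zpow_natCast α (k - 1 - i), ← zpow_add₀ hαne]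
      congr 1
      omega
    rw [Finset.sum_congr rfl h1, ← Finset.mul_sum, Finset.sum_range_reflect, ← hroot,
      ← zpow_natCast α k, ← zpow_add₀ hαne]
    congr 1
    ring
  -- the ψ-recurrence for e
  have hepsi : ∀ j : ℤ, 2 ≤ j → e j = ∑ i ∈ Finset.range k, e (j - 1 - (i:ℤ)) := by
    intro j hj
    simp only [hedef]
    rw [Finset.sum_sub_distrib, ← hrecR j hj, ← Finset.mul_sum]
    have : ∀ i ∈ Finset.range k, α ^ (j - 1 - (i:ℤ) - 1) = α ^ (j - 2 - (i:ℤ)) := by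
      intro i _; congr 1; ring
    rw [Finset.sum_congr rfl this, hzsum j]
  -- the convex-combination recurrence for e
  have hKm : K = (m:ℝ) + 2 := by rw [hKdef, hkdef]; push_cast; ring
  have he1 : e 1 = 1 - c := by
    simp only [hedef, hL1]
    norm_num
  have he0 : e 0 = 2 - c * α⁻¹ := by
    simp only [hedef, hL0]
    norm_num [zpow_neg]
  have heneg : ∀ j : ℤ, 2 - (k:ℤ) ≤ j → j ≤ -1 → e j = -(c * α ^ (j - 1)) := by
    intro j h1 h2
    simp only [hedef, hinit j h1 h2]
    push_cast
    ring
  have peel2 : ∀ f : ℕ → ℝ, ∑ i ∈ Finset.range (m+2), f i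
      = ∑ i ∈ Finset.range m, f (i+2) + (f 1 + f 0) := by
    intro f
    rw [Finset.sum_range_succ' f (m+1), Finset.sum_range_succ' (fun i => f (i+1)) m, add_assoc]
  have hestar : ∀ j : ℤ, 2 ≤ j → e j = ∑ i ∈ Finset.range k, (2 - α) * α ^ i * e (j - 1 - (i:ℤ)) := by
    have base : e 2 = ∑ i ∈ Finset.range k, (2 - α) * α ^ i * e (2 - 1 - (i:ℤ)) := by
      have hL2 : (L 2 : ℝ) = 3 := by
        rw [hrecR 2 (by norm_num), hkdef, peel2 (fun i => (L (2 - 1 - (i:ℤ)) : ℝ))]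
        have hz : ∀ i ∈ Finset.range m, (L (2 - 1 - ((i+2:ℕ):ℤ)) : ℝ) = 0 := by
          intro i hi
          simp only [Finset.mem_range] at hi
          rw [hinit _ (by rw [hkdef]; push_cast; omega) (by push_cast; omega)]
          norm_num
        rw [Finset.sum_congr rfl hz]
        simp only [Finset.sum_const_zero]
        norm_num [hL1, hL0]
      have he2 : e 2 = 3 - c * α := by
        simp only [hedef, hL2]
        norm_num
      rw [he2, hkdef, peel2 (fun i => (2 - α) * α ^ i * e (2 - 1 - (i:ℤ)))]
      have hz : ∀ i ∈ Finset.range m,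
          (2 - α) * α ^ (i+2) * e (2 - 1 - ((i+2:ℕ):ℤ)) = -((2 - α) * c) := by
        intro i hi
        simp only [Finset.mem_range] at hi
        rw [heneg _ (by rw [hkdef]; push_cast; omega) (by push_cast; omega)]
        have hpow : (α : ℝ) ^ (i+2) * α ^ (2 - 1 - ((i+2:ℕ):ℤ) - 1) = 1 := by
          rw [← zpow_natCast α (i+2), ← zpow_add₀ hαne]
          have h0 : ((i+2 : ℕ) : ℤ) + (2 - 1 - ((i+2:ℕ):ℤ) - 1) = 0 := by push_cast; ring
          rw [h0, zpow_zero]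
        calc (2 - α) * α ^ (i+2) * -(c * α ^ (2 - 1 - ((i+2:ℕ):ℤ) - 1))
            = -((2 - α) * c * (α ^ (i+2) * α ^ (2 - 1 - ((i+2:ℕ):ℤ) - 1))) := by ring
          _ = -((2 - α) * c) := by rw [hpow]; ring
      rw [Finset.sum_congr rfl hz, Finset.sum_const, Finset.card_range, nsmul_eq_mul]
      have h1 : e (2 - 1 - ((1:ℕ):ℤ)) = 2 - c * α⁻¹ := by norm_num [he0]
      have h0 : e (2 - 1 - ((0:ℕ):ℤ)) = 1 - c := by norm_num [he1]
      rw [h1, h0]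
      have hcD' : c * ((((m:ℝ)+2) + 1) * α - 2 * ((m:ℝ)+2)) = (2 * α - 1) * (α - 1) := by
        rw [← hKm, ← hDdef]; exact hcD
      have hαinv : α * α⁻¹ = 1 := mul_inv_cancel₀ hαne
      linear_combination (-1 : ℝ) * hcD' + (2-α)*c*hαinv
    refine Int.le_induction base ?_
    intro j hj IH
    have ha := hepsi (j+1) (by omega)
    have hb := hepsi j hj
    rw [hkdef, Finset.sum_range_succ' (fun i => e (j+1 - 1 - (i:ℤ))) (m+1)] at ha
    rw [hkdef, Finset.sum_range_succ (fun i => e (j - 1 - (i:ℤ))) (m+1)] at hb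
    have hre : ∀ i ∈ Finset.range (m+1), e (j+1 - 1 - ((i+1:ℕ):ℤ)) = e (j - 1 - (i:ℤ)) := by
      intro i _; congr 1; push_cast; ring
    rw [Finset.sum_congr rfl hre] at ha
    have hjk : e (j+1) = 2 * e j - e (j - 1 - ((m+1:ℕ):ℤ)) := by
      have h0 : e (j+1 - 1 - ((0:ℕ):ℤ)) = e j := by norm_num
      rw [h0] at ha
      linarith [ha, hb]
    have hw : ∑ i ∈ Finset.range k, (2 - α) * α ^ i * e (j+1 - 1 - (i:ℤ))
        = 2 * e j - e (j - 1 - ((m+1:ℕ):ℤ)) := by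
      rw [hkdef, Finset.sum_range_succ' (fun i => (2 - α) * α ^ i * e (j+1 - 1 - (i:ℤ))) (m+1)]
      have hre2 : ∀ i ∈ Finset.range (m+1),
          (2 - α) * α ^ (i+1) * e (j+1 - 1 - ((i+1:ℕ):ℤ))
          = α * ((2 - α) * α ^ i * e (j - 1 - (i:ℤ))) := by
        intro i hi
        rw [hre i hi]
        ring
      rw [Finset.sum_congr rfl hre2, ← Finset.mul_sum]
      have hIH2 : α * e j = α * (∑ i ∈ Finset.range (m+2), (2 - α) * α ^ i * e (j - 1 - (i:ℤ))) := by
        rw [hkdef] at IH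
        rw [← IH]
      rw [Finset.sum_range_succ (fun i => (2 - α) * α ^ i * e (j - 1 - (i:ℤ))) (m+1),
        mul_add] at hIH2
      have hone : α * ((2 - α) * α ^ (m+1)) = 1 := by
        have hh : α * α ^ (m+1) = α ^ k := by rw [hkdef]; ring
        nlinarith [hkey, hh]
      have h3 : α * ((2 - α) * α ^ (m+1) * e (j - 1 - ((m+1:ℕ):ℤ)))
          = e (j - 1 - ((m+1:ℕ):ℤ)) := by
        rw [show α * ((2 - α) * α ^ (m+1) * e (j - 1 - ((m+1:ℕ):ℤ)))
            = (α * ((2 - α) * α ^ (m+1))) * e (j - 1 - ((m+1:ℕ):ℤ)) from by ring, hone, one_mul]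
      have h00 : e (j+1 - 1 - ((0:ℕ):ℤ)) = e j := by norm_num
      rw [h00, pow_zero]
      linarith [hIH2, h3]
    rw [hw, hjk]
  -- base window bound
  have hebase : ∀ j : ℤ, 2 - (k:ℤ) ≤ j → j ≤ 1 → |e j| < 3/2 := by
    intro j h1 h2
    rcases eq_or_lt_of_le h2 with rfl | h2
    · rw [he1, abs_lt]
      constructor <;> nlinarith [hc1, hc2, hα85]
    · rcases eq_or_lt_of_le (show j ≤ 0 by omega) with rfl | h3
      · rw [he0, abs_lt]
        have hia : α * α⁻¹ = 1 := mul_inv_cancel₀ hαne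
        have hi0 : (0:ℝ) < α⁻¹ := inv_pos.mpr hα0
        constructor <;> nlinarith [hc1, hc2, hα85, hα2, hia, hi0, mul_pos hα0 hi0]
      · have hj1 : j ≤ -1 := by omega
        rw [heneg j h1 hj1, abs_neg, abs_of_pos]
        · have hz1 : α ^ (j - 1) ≤ α ^ (-2 : ℤ) := zpow_le_zpow_right₀ hα1.le (by omega)
          have hz2 : α ^ (-2 : ℤ) * α ^ (2:ℤ) = 1 := by
            rw [← zpow_add₀ hαne]; norm_num
          have hz3 : (0:ℝ) < α ^ (-2 : ℤ) := zpow_pos hα0 _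
          have hz4 : α ^ (2:ℤ) = α * α := by
            rw [show (2:ℤ) = (1:ℤ)+1 from rfl, zpow_add₀ hαne, zpow_one]
          rw [hz4] at hz2
          have hz5 : α ^ (-2:ℤ) < 25/64 := by
            have haa : (64:ℝ)/25 < α * α := by nlinarith [hα85]
            nlinarith [hz2, hz3, mul_pos hz3 (show (0:ℝ) < α*α - 64/25 by linarith)]
          have hcpos : (0:ℝ) < c := by nlinarith [hc1, hα85]
          linarith [mul_le_mul_of_nonneg_left hz1 hcpos.le,
            mul_lt_mul_of_pos_left hz5 hcpos, hc2]
        · exact mul_pos (by nlinarith [hc1, hα85]) (zpow_pos hα0 _)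
  -- main induction
  have hwsum : ∑ i ∈ Finset.range k, (2 - α) * α ^ i = 1 := by
    rw [← Finset.mul_sum, ← hroot]
    nlinarith [hkey]
  have hmain : ∀ N : ℤ, 1 ≤ N → ∀ j : ℤ, 2 - (k:ℤ) ≤ j → j ≤ N → |e j| < 3/2 := by
    refine Int.le_induction ?_ ?_
    · intro j h1 h2; exact hebase j h1 h2
    · intro N hN IH j h1 h2
      rcases eq_or_lt_of_le h2 with rfl | h2
      · -- j = N + 1 ≥ 2
        rw [hestar (N+1) (by omega)]
        have hterm : ∀ i ∈ Finset.range k, |(2 - α) * α ^ i * e (N+1 - 1 - (i:ℤ))|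
            < (2 - α) * α ^ i * (3/2) := by
          intro i hi
          have hwpos : (0:ℝ) < (2 - α) * α ^ i :=
            mul_pos (by linarith) (pow_pos hα0 i)
          have hei : |e (N+1 - 1 - (i:ℤ))| < 3/2 := by
            apply IH
            · simp only [Finset.mem_range] at hi
              omega
            · omega
          calc |(2 - α) * α ^ i * e (N+1 - 1 - (i:ℤ))|
              = (2 - α) * α ^ i * |e (N+1 - 1 - (i:ℤ))| := by
                rw [abs_mul, abs_of_pos hwpos]
            _ < (2 - α) * α ^ i * (3/2) := by
                exact mul_lt_mul_of_pos_left hei hwpos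
        calc |∑ i ∈ Finset.range k, (2 - α) * α ^ i * e (N+1 - 1 - (i:ℤ))|
            ≤ ∑ i ∈ Finset.range k, |(2 - α) * α ^ i * e (N+1 - 1 - (i:ℤ))| :=
              Finset.abs_sum_le_sum_abs _ _
          _ < ∑ i ∈ Finset.range k, (2 - α) * α ^ i * (3/2) :=
              Finset.sum_lt_sum_of_nonempty ⟨0, by simp [hkdef]⟩ hterm
          _ = 3/2 := by rw [← Finset.sum_mul, hwsum, one_mul]
      · exact IH j h1 (by omega)
  have goal : |e n| < 3/2 := by
    rcases le_or_gt n 1 with h | h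
    · exact hebase n hn h
    · exact hmain n (by omega) n hn le_rfl
  have : (2 * α - 1) * ((α - 1) / (2 + (K + 1) * (α - 2))) = c := by
    rw [hcdef, hDdef]; ring_nf
  calc |(L n : ℝ) - (2 * α - 1) * ((α - 1) / (2 + (K + 1) * (α - 2))) * α ^ (n - 1)|
      = |e n| := by rw [this, hedef]
    _ < 3/2 := goal
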